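/- Let w : ℝ → ℝ be continuously differentiable and 1-periodic with ω₊ = max w' > 0 and ω₋ = min w' < 0, and let a ∈ ℝ satisfy 1/ω₋ < -a < 1/ω₊. Define g(p) = p + a·w(p). Then g is strictly increasing, hence a bijection of ℝ, and the function W(z) = w(g⁻¹(z)) is differentiable with max W' = ω₊/(1 + a·ω₊) and min W' = ω₋/(1 + a·ω₋). -/

import Mathlib

/-- Lemma (slanted-spring change of variables): if `w` is `C¹`, 1-periodic, with
`max w' = ω₊ > 0`, `min w' = ω₋ < 0`, and `1/ω₋ < -a < 1/ω₊`, then `g p = p + a * w p`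
is strictly increasing, hence bijective, and `W z = w (g⁻¹ z)` is differentiable with
`max W' = ω₊/(1+a·ω₊)` and `min W' = ω₋/(1+a·ω₋)`. -/
theorem stmt_0 (w : ℝ → ℝ) (hw : ContDiff ℝ 1 w)
    (hper : ∀ x, w (x + 1) = w x)
    (ωp ωm : ℝ)
    (hmax : IsGreatest (Set.range (deriv w)) ωp) (hωp : 0 < ωp)
    (hmin : IsLeast (Set.range (deriv w)) ωm) (hωm : ωm < 0)
    (a : ℝ) (ha₁ : 1 / ωm < -a) (ha₂ : -a < 1 / ωp)
    (g : ℝ → ℝ) (hg : ∀ p, g p = p + a * w p)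
    (W : ℝ → ℝ) (hW : ∀ z, W z = w (Function.invFun g z)) :
    StrictMono g ∧ Function.Bijective g ∧ Differentiable ℝ W ∧
      IsGreatest (Set.range (deriv W)) (ωp / (1 + a * ωp)) ∧
      IsLeast (Set.range (deriv W)) (ωm / (1 + a * ωm)) := by
  have hwd : Differentiable ℝ w := hw.differentiable one_ne_zero
  have hgf : g = fun p => p + a * w p := funext hg
  -- positivity of 1 + a ωp and 1 + a ωm
  have hp1 : 0 < 1 + a * ωp := by
    have := (lt_div_iff₀ hωp).mp ha₂; nlinarith
  have hm1 : 0 < 1 + a * ωm := by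
    have := (div_lt_iff_of_neg hωm).mp ha₁; nlinarith
  have hbound : ∀ p, ωm ≤ deriv w p ∧ deriv w p ≤ ωp := fun p =>
    ⟨hmin.2 ⟨p, rfl⟩, hmax.2 ⟨p, rfl⟩⟩
  have hpos : ∀ t : ℝ, ωm ≤ t → t ≤ ωp → 0 < 1 + a * t := by
    intro t h1 h2
    rcases le_or_gt 0 a with h | h <;> nlinarith
  -- derivative of g
  have hg' : ∀ p, HasDerivAt g (1 + a * deriv w p) p := by
    intro p
    have h := ((hwd p).hasDerivAt.const_mul a)
    have := (hasDerivAt_id p).add h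
    rw [hgf]; exact this
  have hgderiv : ∀ p, deriv g p = 1 + a * deriv w p := fun p => (hg' p).deriv
  have hgpos : ∀ p, 0 < deriv g p := by
    intro p; rw [hgderiv]; exact hpos _ (hbound p).1 (hbound p).2
  have hmono : StrictMono g := strictMono_of_deriv_pos hgpos
  have hgc : Continuous g := by
    rw [hgf]
    exact continuous_id.add (continuous_const.mul hw.continuous)
  -- lower bound on deriv g
  set c : ℝ := min (1 + a * ωp) (1 + a * ωm) with hc
  have hcpos : 0 < c := lt_min hp1 hm1
  have hclb : ∀ p, c ≤ 1 + a * deriv w p := by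
    intro p
    rcases le_or_gt 0 a with h | h
    · calc c ≤ 1 + a * ωm := min_le_right _ _
        _ ≤ 1 + a * deriv w p := by nlinarith [(hbound p).1]
    · calc c ≤ 1 + a * ωp := min_le_left _ _
        _ ≤ 1 + a * deriv w p := by nlinarith [(hbound p).2]
  -- g p - c p is monotone
  have hmono2 : Monotone (fun p => g p - c * p) := by
    apply monotone_of_deriv_nonneg
    · exact fun p => ((hg' p).sub ((hasDerivAt_id p).const_mul c)).differentiableAt
    · intro p
      have : HasDerivAt (fun p => g p - c * p) (1 + a * deriv w p - c * 1) p :=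
        (hg' p).sub ((hasDerivAt_id p).const_mul c)
      rw [this.deriv]
      have := hclb p; linarith
  have htop : Filter.Tendsto g Filter.atTop Filter.atTop := by
    refine Filter.tendsto_atTop_mono' Filter.atTop (f₁ := fun p => (g 0 - c * 0) + c * p) ?_ ?_
    · filter_upwards [Filter.eventually_ge_atTop (0:ℝ)] with p hp
      have := hmono2 hp; dsimp at this; linarith
    · apply Filter.tendsto_atTop_add_const_left
      exact Filter.Tendsto.const_mul_atTop hcpos Filter.tendsto_id
  have hbot : Filter.Tendsto g Filter.atBot Filter.atBot := by
    refine Filter.tendsto_atBot_mono' Filter.atBot (f₁ := fun p => (g 0 - c * 0) + c * p) ?_ ?_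
    · filter_upwards [Filter.eventually_le_atBot (0:ℝ)] with p hp
      have := hmono2 hp; dsimp at this; linarith
    · apply Filter.tendsto_atBot_add_const_left
      exact Filter.Tendsto.const_mul_atBot hcpos Filter.tendsto_id
  have hsurj : Function.Surjective g := hgc.surjective htop hbot
  have hinj : Function.Injective g := hmono.injective
  have hbij : Function.Bijective g := ⟨hinj, hsurj⟩
  set G := Function.invFun g with hG
  have hgG : ∀ z, g (G z) = z := fun z => Function.rightInverse_invFun hsurj z
  have hGg : ∀ p, G (g p) = p := fun p => Function.leftInverse_invFun hinj p
  -- continuity of G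
  have hGcont : Continuous G := by
    set e : ℝ ≃o ℝ := StrictMono.orderIsoOfSurjective g hmono hsurj with he
    have hGe : G = ⇑e.symm := by
      funext z
      apply hinj
      rw [hgG]
      have hco : g = ⇑e := rfl
      rw [hco]
      exact (e.apply_symm_apply z).symm
    rw [hGe]
    exact e.symm.toHomeomorph.continuous
  -- derivative of G and W
  have hG' : ∀ z, HasDerivAt G (1 + a * deriv w (G z))⁻¹ z := by
    intro z
    refine HasDerivAt.of_local_left_inverse hGcont.continuousAt (hg' (G z)) (ne_of_gt ?_) ?_
    · exact hpos _ (hbound _).1 (hbound _).2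
    · exact Filter.Eventually.of_forall hgG
  have hW' : ∀ z, HasDerivAt W (deriv w (G z) * (1 + a * deriv w (G z))⁻¹) z := by
    intro z
    have h1 := (hwd (G z)).hasDerivAt
    have := HasDerivAt.comp z h1 (hG' z)
    have hWe : W = w ∘ G := funext hW
    rw [hWe]; exact this
  have hWdiff : Differentiable ℝ W := fun z => (hW' z).differentiableAt
  have hWderiv : ∀ z, deriv W z = deriv w (G z) / (1 + a * deriv w (G z)) := by
    intro z; rw [(hW' z).deriv, div_eq_mul_inv]
  -- monotone bounds for φ(t) = t/(1+at)
  have hub : ∀ z, deriv W z ≤ ωp / (1 + a * ωp) := by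
    intro z
    rw [hWderiv]
    rw [div_le_div_iff₀ (hpos _ (hbound _).1 (hbound _).2) hp1]
    nlinarith [(hbound (G z)).2, hpos _ (hbound (G z)).1 (hbound (G z)).2]
  have hlb : ∀ z, ωm / (1 + a * ωm) ≤ deriv W z := by
    intro z
    rw [hWderiv]
    rw [div_le_div_iff₀ hm1 (hpos _ (hbound _).1 (hbound _).2)]
    nlinarith [(hbound (G z)).1, hpos _ (hbound (G z)).1 (hbound (G z)).2]
  refine ⟨hmono, hbij, hWdiff, ⟨?_, ?_⟩, ⟨?_, ?_⟩⟩
  · obtain ⟨p, hp⟩ := hmax.1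
    exact ⟨g p, by rw [hWderiv, hGg, hp]⟩
  · rintro y ⟨z, rfl⟩; exact hub z
  · obtain ⟨p, hp⟩ := hmin.1
    exact ⟨g p, by rw [hWderiv, hGg, hp]⟩
  · rintro y ⟨z, rfl⟩; exact hlb z
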